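/- Let E₀ be a Banach space, 0 ≤ α < 1, γ, ϖ, μ ∈ ℝ with β := ω + ϖ + μ - γ < 0 for some ω ∈ ℝ. Then for any continuous g : [0,T] → [0,∞), ∫₀^t (t-s)^{-α} e^{-ω(t-s)} ∫₀^s (s-a)^{-α} e^{(ϖ+μ-γ)(s-a)} g(a) da ds ≤ c · e^{-ωt} ∫₀^t (t-a)^{-α} e^{ωa} g(a) da for all t ∈ [0,T], where c depends only on α and |β|. -/

import Mathlib

open MeasureTheory Set


lemma meas_rpow_const (y : ℝ) : Measurable (fun x : ℝ => x ^ y) := by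
  have hfe : (fun x : ℝ => x ^ y) = fun x =>
      if x = 0 then (0:ℝ) ^ y else
        if x < 0 then Real.exp (Real.log x * y) * Real.cos (y * Real.pi)
        else Real.exp (Real.log x * y) := by
    funext x
    rcases lt_trichotomy x 0 with h | h | h
    · rw [if_neg h.ne, if_pos h, Real.rpow_def_of_neg h]
    · simp [h]
    · rw [if_neg h.ne', if_neg (not_lt.mpr h.le), Real.rpow_def_of_pos h]
  rw [hfe]
  exact Measurable.ite (measurableSet_eq) measurable_const
    (Measurable.ite (measurableSet_Iio : MeasurableSet (Iio (0:ℝ)))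
      ((Real.measurable_exp.comp (Real.measurable_log.mul measurable_const)).mul measurable_const)
      (Real.measurable_exp.comp (Real.measurable_log.mul measurable_const)))

lemma intble_rpow_exp (α b L : ℝ) (hα1 : α < 1) (A B : ℝ) :
    IntervalIntegrable (fun r => r ^ (-α) * Real.exp (-b * r)) volume A B :=
  (intervalIntegral.intervalIntegrable_rpow' (by linarith)).mul_continuousOn
    (Continuous.continuousOn (by continuity))

lemma int_rpow_eval (α L : ℝ) (hα1 : α < 1) (hL : 0 ≤ L) :
    ∫ r in (0:ℝ)..L, r ^ (-α) = L ^ (1 - α) / (1 - α) := by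
  rw [integral_rpow (Or.inl (by linarith))]
  rw [Real.zero_rpow (by linarith : -α + 1 ≠ 0)]
  norm_num
  ring_nf

lemma int_rpow_exp_bound (α b L : ℝ) (hα0 : 0 ≤ α) (hα1 : α < 1) (hb : 0 < b) (hL : 0 < L) :
    ∫ r in (0:ℝ)..L, r ^ (-α) * Real.exp (-b * r) ≤ 1 / (1 - α) + 1 / b := by
  have h1α : (0:ℝ) < 1 - α := by linarith
  by_cases hL1 : L ≤ 1
  · have hmono : ∫ r in (0:ℝ)..L, r ^ (-α) * Real.exp (-b * r) ≤ ∫ r in (0:ℝ)..L, r ^ (-α) := by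
      apply intervalIntegral.integral_mono_on hL.le (intble_rpow_exp α b L hα1 0 L)
        (intervalIntegral.intervalIntegrable_rpow' (by linarith))
      intro x hx
      calc x ^ (-α) * Real.exp (-b * x) ≤ x ^ (-α) * 1 := by
            apply mul_le_mul_of_nonneg_left _ (Real.rpow_nonneg hx.1 _)
            rw [Real.exp_le_one_iff]
            nlinarith [hx.1]
        _ = x ^ (-α) := mul_one _
    rw [int_rpow_eval α L hα1 hL.le] at hmono
    have : L ^ (1 - α) ≤ 1 := Real.rpow_le_one hL.le hL1 h1α.le
    have hb' : 0 ≤ 1 / b := by positivity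
    calc _ ≤ L ^ (1-α) / (1-α) := hmono
      _ ≤ 1 / (1 - α) := by gcongr
      _ ≤ _ := by linarith
  · push_neg at hL1
    have hsplit : ∫ r in (0:ℝ)..L, r ^ (-α) * Real.exp (-b * r)
        = (∫ r in (0:ℝ)..1, r ^ (-α) * Real.exp (-b * r))
          + ∫ r in (1:ℝ)..L, r ^ (-α) * Real.exp (-b * r) :=
      (intervalIntegral.integral_add_adjacent_intervals (intble_rpow_exp α b L hα1 0 1)
        (intble_rpow_exp α b L hα1 1 L)).symm
    have h1 : ∫ r in (0:ℝ)..1, r ^ (-α) * Real.exp (-b * r) ≤ 1 / (1 - α) := by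
      have hmono : ∫ r in (0:ℝ)..1, r ^ (-α) * Real.exp (-b * r) ≤ ∫ r in (0:ℝ)..1, r ^ (-α) := by
        apply intervalIntegral.integral_mono_on zero_le_one (intble_rpow_exp α b L hα1 0 1)
          (intervalIntegral.intervalIntegrable_rpow' (by linarith))
        intro x hx
        calc x ^ (-α) * Real.exp (-b * x) ≤ x ^ (-α) * 1 := by
              apply mul_le_mul_of_nonneg_left _ (Real.rpow_nonneg hx.1 _)
              rw [Real.exp_le_one_iff]
              nlinarith [hx.1]
          _ = x ^ (-α) := mul_one _
      rw [int_rpow_eval α 1 hα1 zero_le_one, Real.one_rpow] at hmono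
      exact hmono
    have h2 : ∫ r in (1:ℝ)..L, r ^ (-α) * Real.exp (-b * r) ≤ 1 / b := by
      have hmono : ∫ r in (1:ℝ)..L, r ^ (-α) * Real.exp (-b * r)
          ≤ ∫ r in (1:ℝ)..L, Real.exp (-b * r) := by
        apply intervalIntegral.integral_mono_on hL1.le (intble_rpow_exp α b L hα1 1 L)
          (Continuous.intervalIntegrable (by continuity) 1 L)
        intro x hx
        calc x ^ (-α) * Real.exp (-b * x) ≤ 1 * Real.exp (-b * x) := by
              apply mul_le_mul_of_nonneg_right _ (Real.exp_pos _).le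
              exact Real.rpow_le_one_of_one_le_of_nonpos hx.1 (by linarith)
          _ = Real.exp (-b * x) := one_mul _
      have hev : ∫ x in (1:ℝ)..L, Real.exp (-b * x)
          = (Real.exp (-b) - Real.exp (-b * L)) / b := by
        rw [intervalIntegral.integral_comp_mul_left (fun u => Real.exp u)
          (by linarith : -b ≠ 0)]
        simp [integral_exp, smul_eq_mul]
        ring
      rw [hev] at hmono
      refine hmono.trans ?_
      have := Real.exp_pos (-b * L)
      have h3 : Real.exp (-b) ≤ 1 := Real.exp_le_one_iff.mpr (by linarith)
      rw [div_le_div_iff₀ hb hb]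
      nlinarith
    rw [hsplit]; linarith



lemma rpow_exp_decay (α b L : ℝ) (hα0 : 0 ≤ α) (hα1 : α < 1) (hb : 0 < b) (hL : 0 < L) :
    Real.exp (-b * L) * L ^ (1 - α) ≤ 1 + 1 / b := by
  have h1 : L ^ (1 - α) ≤ 1 + L := by
    by_cases hL1 : L ≤ 1
    · have := Real.rpow_le_one hL.le hL1 (by linarith : (0:ℝ) ≤ 1 - α)
      linarith
    · push_neg at hL1
      have := Real.rpow_le_rpow_of_exponent_le hL1.le (by linarith : 1 - α ≤ 1)
      rw [Real.rpow_one] at this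
      linarith
  have he := Real.exp_pos (-b * L)
  have he1 : Real.exp (-b * L) ≤ 1 := Real.exp_le_one_iff.mpr (by nlinarith)
  have h2 : L * Real.exp (-b * L) ≤ 1 / b := by
    have hble : b * L ≤ Real.exp (b * L) := by
      have := Real.add_one_le_exp (b * L); linarith
    have heq : Real.exp (-b * L) = (Real.exp (b * L))⁻¹ := by
      rw [← Real.exp_neg]; ring_nf
    rw [heq, le_div_iff₀ hb]
    have hpe := Real.exp_pos (b * L)
    calc L * (Real.exp (b * L))⁻¹ * b = (b * L) * (Real.exp (b * L))⁻¹ := by ring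
      _ ≤ Real.exp (b * L) * (Real.exp (b * L))⁻¹ :=
          mul_le_mul_of_nonneg_right hble (by positivity)
      _ = 1 := mul_inv_cancel₀ hpe.ne'
  calc Real.exp (-b * L) * L ^ (1 - α) ≤ Real.exp (-b * L) * (1 + L) :=
        mul_le_mul_of_nonneg_left h1 he.le
    _ = Real.exp (-b * L) + L * Real.exp (-b * L) := by ring
    _ ≤ 1 + 1 / b := add_le_add he1 h2

lemma key_conv (α b a t : ℝ) (hα0 : 0 ≤ α) (hα1 : α < 1) (hb : 0 < b) (hat : a < t) :
    ∫⁻ s in Ioc a t,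
        ENNReal.ofReal ((t - s) ^ (-α) * ((s - a) ^ (-α) * Real.exp (-b * (s - a))))
      ≤ ENNReal.ofReal (((2:ℝ) ^ α * (1 / (1 - α) + 1 / b + (1 + 1 / b) / (1 - α)))
          * (t - a) ^ (-α)) := by
  have h1α : (0:ℝ) < 1 - α := by linarith
  set L : ℝ := (t - a) / 2 with hLdef
  have hL : 0 < L := by simp only [hLdef]; linarith
  set m : ℝ := a + L with hmdef
  have ham : a < m := by simp only [hmdef]; linarith
  have hmt : m < t := by simp only [hmdef, hLdef]; linarith
  have htm : t - m = L := by simp only [hmdef, hLdef]; ring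
  have hma : m - a = L := by simp only [hmdef]; ring
  rw [← Ioc_union_Ioc_eq_Ioc ham.le hmt.le, lintegral_union measurableSet_Ioc
    (Ioc_disjoint_Ioc_of_le le_rfl)]
  -- piece 1
  have hp1 : ∫⁻ s in Ioc a m,
      ENNReal.ofReal ((t - s) ^ (-α) * ((s - a) ^ (-α) * Real.exp (-b * (s - a))))
      ≤ ENNReal.ofReal (L ^ (-α) * (1 / (1 - α) + 1 / b)) := by
    have hmono : ∫⁻ s in Ioc a m,
        ENNReal.ofReal ((t - s) ^ (-α) * ((s - a) ^ (-α) * Real.exp (-b * (s - a))))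
        ≤ ∫⁻ s in Ioc a m,
          ENNReal.ofReal (L ^ (-α) * ((s - a) ^ (-α) * Real.exp (-b * (s - a)))) := by
      apply setLIntegral_mono' measurableSet_Ioc
      intro s hs
      apply ENNReal.ofReal_le_ofReal
      apply mul_le_mul_of_nonneg_right
      · apply Real.rpow_le_rpow_of_nonpos hL _ (by linarith)
        rw [← htm]; linarith [hs.2]
      · exact mul_nonneg (Real.rpow_nonneg (by linarith [hs.1]) _) (Real.exp_pos _).le
    refine hmono.trans ?_
    have hint : IntegrableOn (fun s => L ^ (-α) * ((s - a) ^ (-α) * Real.exp (-b * (s - a))))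
        (Ioc a m) volume := by
      rw [← intervalIntegrable_iff_integrableOn_Ioc_of_le ham.le]
      apply IntervalIntegrable.const_mul
      have := (intble_rpow_exp α b L hα1 0 L).comp_sub_right a
      simpa [hmdef, add_comm] using this
    have hnn : 0 ≤ᵐ[volume.restrict (Ioc a m)]
        fun s => L ^ (-α) * ((s - a) ^ (-α) * Real.exp (-b * (s - a))) := by
      refine (ae_restrict_iff' measurableSet_Ioc).mpr (.of_forall fun s hs => ?_)
      exact mul_nonneg (Real.rpow_nonneg hL.le _)
        (mul_nonneg (Real.rpow_nonneg (by linarith [hs.1]) _) (Real.exp_pos _).le)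
    rw [← ofReal_integral_eq_lintegral_ofReal hint hnn]
    apply ENNReal.ofReal_le_ofReal
    rw [← intervalIntegral.integral_of_le ham.le, intervalIntegral.integral_const_mul]
    apply mul_le_mul_of_nonneg_left _ (Real.rpow_nonneg hL.le _)
    have hsub : ∫ s in a..m, (s - a) ^ (-α) * Real.exp (-b * (s - a))
        = ∫ r in (0:ℝ)..L, r ^ (-α) * Real.exp (-b * r) := by
      have := intervalIntegral.integral_comp_sub_right
        (fun r => r ^ (-α) * Real.exp (-b * r)) a (a := a) (b := m)
      simpa [hma, sub_self] using this
    rw [hsub]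
    exact int_rpow_exp_bound α b L hα0 hα1 hb hL
  -- piece 2
  have hp2 : ∫⁻ s in Ioc m t,
      ENNReal.ofReal ((t - s) ^ (-α) * ((s - a) ^ (-α) * Real.exp (-b * (s - a))))
      ≤ ENNReal.ofReal (L ^ (-α) * ((1 + 1 / b) / (1 - α))) := by
    have hmono : ∫⁻ s in Ioc m t,
        ENNReal.ofReal ((t - s) ^ (-α) * ((s - a) ^ (-α) * Real.exp (-b * (s - a))))
        ≤ ∫⁻ s in Ioc m t,
          ENNReal.ofReal ((L ^ (-α) * Real.exp (-b * L)) * (t - s) ^ (-α)) := by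
      apply setLIntegral_mono' measurableSet_Ioc
      intro s hs
      apply ENNReal.ofReal_le_ofReal
      have hsa : L ≤ s - a := by rw [← hma]; linarith [hs.1]
      have h1 : (s - a) ^ (-α) ≤ L ^ (-α) :=
        Real.rpow_le_rpow_of_nonpos hL hsa (by linarith)
      have h2 : Real.exp (-b * (s - a)) ≤ Real.exp (-b * L) := by
        apply Real.exp_le_exp.mpr; nlinarith
      have hts : 0 ≤ (t - s) ^ (-α) := Real.rpow_nonneg (by linarith [hs.2]) _
      calc (t - s) ^ (-α) * ((s - a) ^ (-α) * Real.exp (-b * (s - a)))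
          ≤ (t - s) ^ (-α) * (L ^ (-α) * Real.exp (-b * L)) := by
            apply mul_le_mul_of_nonneg_left _ hts
            apply mul_le_mul h1 h2 (Real.exp_pos _).le (Real.rpow_nonneg hL.le _)
        _ = (L ^ (-α) * Real.exp (-b * L)) * (t - s) ^ (-α) := by ring
    refine hmono.trans ?_
    have hint : IntegrableOn (fun s => (L ^ (-α) * Real.exp (-b * L)) * (t - s) ^ (-α))
        (Ioc m t) volume := by
      rw [← intervalIntegrable_iff_integrableOn_Ioc_of_le hmt.le]
      apply IntervalIntegrable.const_mul
      have h := (intervalIntegral.intervalIntegrable_rpow' (r := -α)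
        (by linarith : (-1:ℝ) < -α) (a := 0) (b := L)).comp_sub_left t
      rw [sub_zero] at h
      have hteq : t - L = m := by rw [← htm]; ring
      rw [hteq] at h
      exact h.symm
    have hnn : 0 ≤ᵐ[volume.restrict (Ioc m t)]
        fun s => (L ^ (-α) * Real.exp (-b * L)) * (t - s) ^ (-α) := by
      refine (ae_restrict_iff' measurableSet_Ioc).mpr (.of_forall fun s hs => ?_)
      exact mul_nonneg (mul_nonneg (Real.rpow_nonneg hL.le _) (Real.exp_pos _).le)
        (Real.rpow_nonneg (by linarith [hs.2]) _)
    rw [← ofReal_integral_eq_lintegral_ofReal hint hnn]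
    apply ENNReal.ofReal_le_ofReal
    rw [← intervalIntegral.integral_of_le hmt.le, intervalIntegral.integral_const_mul]
    have hsub : ∫ s in m..t, (t - s) ^ (-α) = ∫ r in (0:ℝ)..L, r ^ (-α) := by
      have := intervalIntegral.integral_comp_sub_left
        (fun r => r ^ (-α)) t (a := m) (b := t)
      rw [sub_self, htm] at this
      exact this
    rw [hsub, int_rpow_eval α L hα1 hL.le]
    calc L ^ (-α) * Real.exp (-b * L) * (L ^ (1 - α) / (1 - α))
        = L ^ (-α) * ((Real.exp (-b * L) * L ^ (1 - α)) / (1 - α)) := by ring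
      _ ≤ L ^ (-α) * ((1 + 1 / b) / (1 - α)) := by
          apply mul_le_mul_of_nonneg_left _ (Real.rpow_nonneg hL.le _)
          gcongr
          exact rpow_exp_decay α b L hα0 hα1 hb hL
  -- combine
  refine (add_le_add hp1 hp2).trans ?_
  rw [← ENNReal.ofReal_add (by positivity) (by positivity)]
  apply ENNReal.ofReal_le_ofReal
  have hLα : L ^ (-α) = 2 ^ α * (t - a) ^ (-α) := by
    have hL2 : L = (t - a) * 2⁻¹ := by rw [hLdef]; ring
    rw [hL2, Real.mul_rpow (sub_nonneg.mpr hat.le) (by norm_num : (0:ℝ) ≤ 2⁻¹),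
      Real.inv_rpow (by norm_num : (0:ℝ) ≤ 2), ← Real.rpow_neg (by norm_num : (0:ℝ) ≤ 2),
      neg_neg]
    ring
  rw [hLα]; ring_nf; exact le_rfl



theorem stmt16 (α ω ϖ μ γ : ℝ) (hα0 : 0 ≤ α) (hα1 : α < 1)
    (hβ : ω + ϖ + μ - γ < 0) :
    ∃ c > 0, ∀ T : ℝ, 0 < T → ∀ g : ℝ → ℝ, ContinuousOn g (Icc 0 T) →
      (∀ a ∈ Icc (0:ℝ) T, 0 ≤ g a) →
      ∀ t ∈ Icc (0:ℝ) T,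
        (∫ s in (0:ℝ)..t, (t - s) ^ (-α) * Real.exp (-ω * (t - s)) *
            ∫ a in (0:ℝ)..s, (s - a) ^ (-α) * Real.exp ((ϖ + μ - γ) * (s - a)) * g a)
          ≤ c * Real.exp (-ω * t) * ∫ a in (0:ℝ)..t, (t - a) ^ (-α) * Real.exp (ω * a) * g a := by
  have h1α : (0:ℝ) < 1 - α := by linarith
  set b : ℝ := -(ω + ϖ + μ - γ) with hbdef
  have hb : 0 < b := by simp only [hbdef]; linarith
  set C : ℝ := (2:ℝ) ^ α * (1 / (1 - α) + 1 / b + (1 + 1 / b) / (1 - α)) with hCdef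
  have hC : 0 < C := by
    have h2 : (0:ℝ) < (2:ℝ) ^ α := Real.rpow_pos_of_pos (by norm_num) _
    have : (0:ℝ) < 1 / (1 - α) + 1 / b + (1 + 1 / b) / (1 - α) := by positivity
    positivity
  refine ⟨C, hC, ?_⟩
  intro T hT g hgc hg0 t ht
  rcases eq_or_lt_of_le ht.1 with h0t | h0t
  · rw [← h0t]
    simp
  -- clamp g
  set g₁ : ℝ → ℝ := fun x => g (max 0 (min x T)) with hg₁def
  have hmem : ∀ x : ℝ, max 0 (min x T) ∈ Icc (0:ℝ) T := fun x =>
    ⟨le_max_left _ _, max_le hT.le (min_le_right _ _)⟩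
  have hg₁c : Continuous g₁ := hgc.comp_continuous (continuous_const.max (continuous_id.min continuous_const)) hmem
  have hg₁0 : ∀ x, 0 ≤ g₁ x := fun x => hg0 _ (hmem x)
  have hg₁eq : ∀ x ∈ Icc (0:ℝ) T, g₁ x = g x := by
    intro x hx
    simp only [hg₁def, min_eq_left hx.2, max_eq_right hx.1]
  -- rewrite with g₁
  have hinner : ∀ s ∈ Icc (0:ℝ) t,
      (∫ a in (0:ℝ)..s, (s - a) ^ (-α) * Real.exp ((ϖ + μ - γ) * (s - a)) * g a)
      = ∫ a in (0:ℝ)..s, (s - a) ^ (-α) * Real.exp ((ϖ + μ - γ) * (s - a)) * g₁ a := by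
    intro s hs
    apply intervalIntegral.integral_congr
    intro a ha
    rw [uIcc_of_le hs.1] at ha
    show (s - a) ^ (-α) * Real.exp ((ϖ + μ - γ) * (s - a)) * g a
      = (s - a) ^ (-α) * Real.exp ((ϖ + μ - γ) * (s - a)) * g₁ a
    rw [hg₁eq a ⟨ha.1, le_trans (le_trans ha.2 hs.2) ht.2⟩]
  have hL : (∫ s in (0:ℝ)..t, (t - s) ^ (-α) * Real.exp (-ω * (t - s)) *
        ∫ a in (0:ℝ)..s, (s - a) ^ (-α) * Real.exp ((ϖ + μ - γ) * (s - a)) * g a)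
      = ∫ s in (0:ℝ)..t, (t - s) ^ (-α) * Real.exp (-ω * (t - s)) *
        ∫ a in (0:ℝ)..s, (s - a) ^ (-α) * Real.exp ((ϖ + μ - γ) * (s - a)) * g₁ a := by
    apply intervalIntegral.integral_congr
    intro s hs
    rw [uIcc_of_le h0t.le] at hs
    show (t - s) ^ (-α) * Real.exp (-ω * (t - s)) *
        (∫ a in (0:ℝ)..s, (s - a) ^ (-α) * Real.exp ((ϖ + μ - γ) * (s - a)) * g a)
      = (t - s) ^ (-α) * Real.exp (-ω * (t - s)) *
        ∫ a in (0:ℝ)..s, (s - a) ^ (-α) * Real.exp ((ϖ + μ - γ) * (s - a)) * g₁ a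
    rw [hinner s hs]
  have hR : (∫ a in (0:ℝ)..t, (t - a) ^ (-α) * Real.exp (ω * a) * g a)
      = ∫ a in (0:ℝ)..t, (t - a) ^ (-α) * Real.exp (ω * a) * g₁ a := by
    apply intervalIntegral.integral_congr
    intro a ha
    rw [uIcc_of_le h0t.le] at ha
    show (t - a) ^ (-α) * Real.exp (ω * a) * g a = (t - a) ^ (-α) * Real.exp (ω * a) * g₁ a
    rw [hg₁eq a ⟨ha.1, le_trans ha.2 ht.2⟩]
  rw [hL, hR]
  set F : ℝ → ℝ := fun s => (t - s) ^ (-α) * Real.exp (-ω * (t - s)) *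
      ∫ a in (0:ℝ)..s, (s - a) ^ (-α) * Real.exp ((ϖ + μ - γ) * (s - a)) * g₁ a with hFdef
  have hRHS0 : 0 ≤ ∫ a in (0:ℝ)..t, (t - a) ^ (-α) * Real.exp (ω * a) * g₁ a := by
    apply intervalIntegral.integral_nonneg h0t.le
    intro u hu
    exact mul_nonneg (mul_nonneg (Real.rpow_nonneg (by linarith [hu.2]) _)
      (Real.exp_pos _).le) (hg₁0 u)
  have hRHSnn : 0 ≤ C * Real.exp (-ω * t) *
      ∫ a in (0:ℝ)..t, (t - a) ^ (-α) * Real.exp (ω * a) * g₁ a :=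
    mul_nonneg (mul_nonneg hC.le (Real.exp_pos _).le) hRHS0
  rw [intervalIntegral.integral_of_le h0t.le]
  have hF0 : ∀ s ∈ Ioc (0:ℝ) t, 0 ≤ F s := by
    intro s hs
    apply mul_nonneg (mul_nonneg (Real.rpow_nonneg (by linarith [hs.2]) _) (Real.exp_pos _).le)
    apply intervalIntegral.integral_nonneg hs.1.le
    intro u hu
    exact mul_nonneg (mul_nonneg (Real.rpow_nonneg (by linarith [hu.2]) _)
      (Real.exp_pos _).le) (hg₁0 u)
  by_cases hFm : AEStronglyMeasurable F (volume.restrict (Ioc 0 t))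
  swap
  · rw [integral_non_aestronglyMeasurable hFm]
    exact hRHSnn
  -- main estimate
  set Φ : ℝ → ℝ → ENNReal := fun s a =>
    ENNReal.ofReal ((t - s) ^ (-α) * Real.exp (-ω * (t - s))) *
    ENNReal.ofReal ((s - a) ^ (-α) * Real.exp ((ϖ + μ - γ) * (s - a)) * g₁ a) with hΦdef
  set Ψ : ℝ → ℝ → ENNReal := fun s a => if 0 < a ∧ a ≤ s then Φ s a else 0 with hΨdef
  have hΦm : Measurable (fun p : ℝ × ℝ => Φ p.1 p.2) := by
    refine Measurable.mul
      (f := fun p : ℝ × ℝ => ENNReal.ofReal ((t - p.1) ^ (-α) * Real.exp (-ω * (t - p.1))))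
      (g := fun p : ℝ × ℝ =>
        ENNReal.ofReal ((p.1 - p.2) ^ (-α) * Real.exp ((ϖ + μ - γ) * (p.1 - p.2)) * g₁ p.2)) ?_ ?_
    · apply Measurable.ennreal_ofReal
      exact ((meas_rpow_const (-α)).comp (measurable_const.sub measurable_fst)).mul
        (Real.measurable_exp.comp ((measurable_const.sub measurable_fst).const_mul (-ω)))
    · apply Measurable.ennreal_ofReal
      exact (((meas_rpow_const (-α)).comp (measurable_fst.sub measurable_snd)).mul
        (Real.measurable_exp.comp ((measurable_fst.sub measurable_snd).const_mul _))).mul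
        (hg₁c.measurable.comp measurable_snd)
  have hΨm : Measurable (fun p : ℝ × ℝ => Ψ p.1 p.2) := by
    have : (fun p : ℝ × ℝ => Ψ p.1 p.2) =
        fun p => ({q : ℝ × ℝ | 0 < q.2 ∧ q.2 ≤ q.1}).indicator (fun q => Φ q.1 q.2) p := by
      funext p
      simp only [hΨdef, indicator_apply, mem_setOf_eq]
    rw [this]
    exact hΦm.indicator ((measurableSet_lt measurable_const measurable_snd).inter
      (measurableSet_le measurable_snd measurable_fst))
  -- step: inner Ioc 0 s lintegral equals Ψ-form over Ioc 0 t
  have hind : ∀ s ∈ Ioc (0:ℝ) t,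
      (∫⁻ a in Ioc (0:ℝ) t, Ψ s a) = ∫⁻ a in Ioc (0:ℝ) s, Φ s a := by
    intro s hs
    have heq : (fun a => Ψ s a) = (Ioc (0:ℝ) s).indicator (fun a => Φ s a) := by
      funext a
      simp only [hΨdef, indicator_apply, mem_Ioc]
    rw [heq, lintegral_indicator measurableSet_Ioc, Measure.restrict_restrict measurableSet_Ioc,
      inter_eq_self_of_subset_left (Ioc_subset_Ioc_right hs.2)]
  have hstep : (∫⁻ s in Ioc (0:ℝ) t, ENNReal.ofReal (F s))
      ≤ ∫⁻ s in Ioc (0:ℝ) t, ∫⁻ a in Ioc (0:ℝ) t, Ψ s a := by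
    apply setLIntegral_mono' measurableSet_Ioc
    intro s hs
    rw [hind s hs]
    have hcs : 0 ≤ (t - s) ^ (-α) * Real.exp (-ω * (t - s)) :=
      mul_nonneg (Real.rpow_nonneg (by linarith [hs.2]) _) (Real.exp_pos _).le
    have hFs : F s = ((t - s) ^ (-α) * Real.exp (-ω * (t - s))) *
        ∫ a in Ioc (0:ℝ) s, (s - a) ^ (-α) * Real.exp ((ϖ + μ - γ) * (s - a)) * g₁ a := by
      rw [hFdef]
      simp only []
      rw [intervalIntegral.integral_of_le hs.1.le]
    rw [hFs, ENNReal.ofReal_mul hcs]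
    simp only [hΦdef]
    rw [lintegral_const_mul' _ _ ENNReal.ofReal_ne_top]
    apply mul_le_mul_right
    by_cases hsi : IntegrableOn
        (fun a => (s - a) ^ (-α) * Real.exp ((ϖ + μ - γ) * (s - a)) * g₁ a) (Ioc 0 s) volume
    · rw [ofReal_integral_eq_lintegral_ofReal hsi]
      refine (ae_restrict_iff' measurableSet_Ioc).mpr (.of_forall fun a ha => ?_)
      exact mul_nonneg (mul_nonneg (Real.rpow_nonneg (by linarith [ha.2]) _)
        (Real.exp_pos _).le) (hg₁0 a)
    · rw [integral_undef hsi]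
      simp
  -- Tonelli
  have hswap : (∫⁻ s in Ioc (0:ℝ) t, ∫⁻ a in Ioc (0:ℝ) t, Ψ s a)
      = ∫⁻ a in Ioc (0:ℝ) t, ∫⁻ s in Ioc (0:ℝ) t, Ψ s a :=
    lintegral_lintegral_swap hΨm.aemeasurable
  -- per-a bound
  have hper : ∀ a ∈ Ioc (0:ℝ) t,
      (∫⁻ s in Ioc (0:ℝ) t, Ψ s a) ≤ ENNReal.ofReal (C * Real.exp (-ω * t) *
        ((t - a) ^ (-α) * Real.exp (ω * a) * g₁ a)) := by
    intro a ha
    have heq : (fun s => Ψ s a) = (Ici a).indicator (fun s => Φ s a) := by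
      funext s
      simp only [hΨdef, indicator_apply, mem_Ici]
      by_cases h : a ≤ s
      · simp [h, ha.1]
      · simp [h]
    have h1 : (∫⁻ s in Ioc (0:ℝ) t, Ψ s a) = ∫⁻ s in Icc a t, Φ s a := by
      rw [heq, lintegral_indicator measurableSet_Ici,
        Measure.restrict_restrict measurableSet_Ici]
      congr 1
      have hseteq : Ici a ∩ Ioc 0 t = Icc a t := by
        ext s
        simp only [mem_inter_iff, mem_Ici, mem_Ioc, mem_Icc]
        constructor
        · rintro ⟨hh1, _, hh3⟩; exact ⟨hh1, hh3⟩
        · rintro ⟨hh1, hh2⟩; exact ⟨hh1, lt_of_lt_of_le ha.1 hh1, hh2⟩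
      rw [hseteq]
    rw [h1]
    have hA : 0 ≤ Real.exp (-ω * t) * Real.exp (ω * a) * g₁ a :=
      mul_nonneg (mul_nonneg (Real.exp_pos _).le (Real.exp_pos _).le) (hg₁0 a)
    have hΦpt : ∀ s ∈ Icc a t, Φ s a
        = ENNReal.ofReal (Real.exp (-ω * t) * Real.exp (ω * a) * g₁ a) *
          ENNReal.ofReal ((t - s) ^ (-α) * ((s - a) ^ (-α) * Real.exp (-b * (s - a)))) := by
      intro s hs
      have hcs : 0 ≤ (t - s) ^ (-α) * Real.exp (-ω * (t - s)) :=
        mul_nonneg (Real.rpow_nonneg (by linarith [hs.2]) _) (Real.exp_pos _).le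
      simp only [hΦdef]
      rw [← ENNReal.ofReal_mul hcs, ← ENNReal.ofReal_mul hA]
      congr 1
      have hexp : Real.exp (-ω * (t - s)) * Real.exp ((ϖ + μ - γ) * (s - a))
          = Real.exp (-ω * t) * Real.exp (ω * a) * Real.exp (-b * (s - a)) := by
        rw [← Real.exp_add, ← Real.exp_add, ← Real.exp_add]
        congr 1
        simp only [hbdef]
        ring
      linear_combination ((t - s) ^ (-α) * (s - a) ^ (-α) * g₁ a) * hexp
    rw [setLIntegral_congr_fun measurableSet_Icc hΦpt]
    rw [lintegral_const_mul' _ _ ENNReal.ofReal_ne_top]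
    have hIcc : (∫⁻ s in Icc a t,
          ENNReal.ofReal ((t - s) ^ (-α) * ((s - a) ^ (-α) * Real.exp (-b * (s - a)))))
        = ∫⁻ s in Ioc a t,
          ENNReal.ofReal ((t - s) ^ (-α) * ((s - a) ^ (-α) * Real.exp (-b * (s - a)))) :=
      (setLIntegral_congr MeasureTheory.Ioc_ae_eq_Icc).symm
    rcases eq_or_lt_of_le ha.2 with hat | hat
    · rw [hIcc, hat, Ioc_self]
      simp
    · refine le_trans (mul_le_mul_right (hIcc ▸ key_conv α b a t hα0 hα1 hb hat) _) ?_
      rw [← ENNReal.ofReal_mul hA]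
      apply ENNReal.ofReal_le_ofReal
      apply le_of_eq
      rw [hCdef]
      ring
  have hbound : (∫⁻ a in Ioc (0:ℝ) t, ∫⁻ s in Ioc (0:ℝ) t, Ψ s a)
      ≤ ∫⁻ a in Ioc (0:ℝ) t, ENNReal.ofReal (C * Real.exp (-ω * t) *
          ((t - a) ^ (-α) * Real.exp (ω * a) * g₁ a)) :=
    setLIntegral_mono' measurableSet_Ioc hper
  have hρint : IntegrableOn (fun a => C * Real.exp (-ω * t) *
      ((t - a) ^ (-α) * Real.exp (ω * a) * g₁ a)) (Ioc 0 t) volume := by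
    rw [← intervalIntegrable_iff_integrableOn_Ioc_of_le h0t.le]
    apply IntervalIntegrable.const_mul
    have h1 : IntervalIntegrable (fun x : ℝ => (t - x) ^ (-α)) volume 0 t := by
      have h := (intervalIntegral.intervalIntegrable_rpow' (r := -α)
        (by linarith : (-1:ℝ) < -α) (a := 0) (b := t)).comp_sub_left t
      rw [sub_zero, sub_self] at h
      exact h.symm
    have hce : Continuous fun x : ℝ => Real.exp (ω * x) :=
      Real.continuous_exp.comp (continuous_const.mul continuous_id)
    exact (h1.mul_continuousOn hce.continuousOn).mul_continuousOn hg₁c.continuousOn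
  have hρnn : 0 ≤ᵐ[volume.restrict (Ioc (0:ℝ) t)] fun a => C * Real.exp (-ω * t) *
      ((t - a) ^ (-α) * Real.exp (ω * a) * g₁ a) := by
    refine (ae_restrict_iff' measurableSet_Ioc).mpr (.of_forall fun a ha => ?_)
    exact mul_nonneg (mul_nonneg hC.le (Real.exp_pos _).le)
      (mul_nonneg (mul_nonneg (Real.rpow_nonneg (by linarith [ha.2]) _)
        (Real.exp_pos _).le) (hg₁0 a))
  have hofReal : (∫⁻ a in Ioc (0:ℝ) t, ENNReal.ofReal (C * Real.exp (-ω * t) *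
        ((t - a) ^ (-α) * Real.exp (ω * a) * g₁ a)))
      = ENNReal.ofReal (C * Real.exp (-ω * t) *
          ∫ a in (0:ℝ)..t, (t - a) ^ (-α) * Real.exp (ω * a) * g₁ a) := by
    rw [← ofReal_integral_eq_lintegral_ofReal hρint hρnn]
    congr 1
    rw [← intervalIntegral.integral_of_le h0t.le, intervalIntegral.integral_const_mul]
  rw [integral_eq_lintegral_of_nonneg_ae
    ((ae_restrict_iff' measurableSet_Ioc).mpr (.of_forall hF0)) hFm]
  have hch : (∫⁻ s in Ioc (0:ℝ) t, ENNReal.ofReal (F s))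
      ≤ ENNReal.ofReal (C * Real.exp (-ω * t) *
          ∫ a in (0:ℝ)..t, (t - a) ^ (-α) * Real.exp (ω * a) * g₁ a) := by
    calc (∫⁻ s in Ioc (0:ℝ) t, ENNReal.ofReal (F s))
        ≤ ∫⁻ s in Ioc (0:ℝ) t, ∫⁻ a in Ioc (0:ℝ) t, Ψ s a := hstep
      _ = ∫⁻ a in Ioc (0:ℝ) t, ∫⁻ s in Ioc (0:ℝ) t, Ψ s a := hswap
      _ ≤ _ := hbound
      _ = _ := hofReal
  calc (∫⁻ s in Ioc (0:ℝ) t, ENNReal.ofReal (F s)).toReal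
      ≤ (ENNReal.ofReal (C * Real.exp (-ω * t) *
          ∫ a in (0:ℝ)..t, (t - a) ^ (-α) * Real.exp (ω * a) * g₁ a)).toReal :=
        ENNReal.toReal_mono ENNReal.ofReal_ne_top hch
    _ = _ := ENNReal.toReal_ofReal hRHSnn
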